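/- Let S be a finite set with |S| = d ≥ 2, let A be a nonempty finite set, let L_T > 0 and 0 < ε ≤ 1/4 with 5ε ≤ L_T. Set ζ := ⌊L_T/(5ε)⌋ and let 𝓝_ζ := {μ ∈ Δ(S) : ζ·μ(s) ∈ ℤ for every s ∈ S}. For μ ∈ 𝓝_ζ define the kernel P_μ : S × A × Δ(S) → Δ({t₁,t₂}) by P_μ(t₁|s,a,ν) := 1/2 + 2ε·max{1 − (L_T/(4ε))·‖ν−μ‖₁, 0} and P_μ(t₂|s,a,ν) := 1 − P_μ(t₁|s,a,ν), and let 𝓜 := {P_μ : μ ∈ 𝓝_ζ}. Then: (i) |𝓝_ζ| = C(ζ+d−1, d−1) (binomial coefficient); (ii) any two distinct μ, μ' ∈ 𝓝_ζ satisfy ‖μ − μ'‖₁ ≥ 2/ζ; (iii) for any fixed (s,a) ∈ S×A and any enumeration μ¹, …, μ^N of 𝓝_ζ (N = |𝓝_ζ|), the sequence ((s,a,μ^i))_{i=1}^{N−1} is ε-independent with respect to 𝓜; consequently dim_E(𝓜, ε) ≥ C(ζ+d−1, d−1) − 1, which is exponential in |S| when L_T/ε is proportional to |S|. -/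

import Mathlib

/-- The hard tabular mean-field model class: for `ζ := ⌊L_T/(5ε)⌋` and the
grid `𝓝_ζ` of densities with resolution `1/ζ`, the class `𝓜 = {P_μ : μ ∈ 𝓝_ζ}` of kernels
`P_μ(t₁|s,a,ν) = 1/2 + 2ε·[1 − (L_T/(4ε))·‖ν−μ‖₁]⁺` satisfies:
(i) `|𝓝_ζ| = C(ζ+d−1, d−1)`;
(ii) distinct grid points are ℓ1-separated by at least `2/ζ`;
(iii) for any `(s,a)` and any enumeration of `𝓝_ζ`, the first `N−1` points give an
ε-independent sequence with respect to `𝓜`; consequently there is an ε-independent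
sequence of length `C(ζ+d−1,d−1) − 1`, so `dim_E(𝓜,ε) ≥ C(ζ+d−1,d−1) − 1`. -/
theorem MFC_lower_bound_construction {S A : Type*} [Fintype S] [Fintype A] [Nonempty A]
    (d : ℕ) (hd : 2 ≤ d) (hcard : Fintype.card S = d)
    (L_T ε : ℝ) (hL : 0 < L_T) (hε : 0 < ε) (hε4 : ε ≤ 1 / 4) (hεL : 5 * ε ≤ L_T)
    (ζ : ℕ) (hζ : ζ = ⌊L_T / (5 * ε)⌋₊)
    (𝓝 : Set (S → ℝ))
    (h𝓝 : 𝓝 = {μ | μ ∈ stdSimplex ℝ S ∧ ∀ s, ∃ k : ℕ, (ζ : ℝ) * μ s = k})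
    (P : (S → ℝ) → S → A → (S → ℝ) → Fin 2 → ℝ)
    (hP0 : ∀ μ s a ν, P μ s a ν 0 =
      1 / 2 + 2 * ε * max (1 - L_T / (4 * ε) * ∑ x, |ν x - μ x|) 0)
    (hP1 : ∀ μ s a ν, P μ s a ν 1 = 1 - P μ s a ν 0) :
    -- (i) cardinality of the grid
    𝓝.ncard = (ζ + d - 1).choose (d - 1) ∧
    -- (ii) ℓ1 separation of distinct grid points
    (∀ μ ∈ 𝓝, ∀ μ' ∈ 𝓝, μ ≠ μ' → 2 / (ζ : ℝ) ≤ ∑ s, |μ s - μ' s|) ∧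
    -- (iii) ε-independence of the enumerated sequence
    (∀ (s : S) (a : A) (Nn : ℕ) (e : Fin Nn → (S → ℝ)),
      Function.Injective e → Set.range e = 𝓝 →
      ∀ i : Fin (Nn - 1), ∃ μ ∈ 𝓝, ∃ μ' ∈ 𝓝,
        (∑ t ∈ Finset.Iio i,
            (∑ x : Fin 2, |P μ s a (e (Fin.castLE (Nat.sub_le Nn 1) t)) x
              - P μ' s a (e (Fin.castLE (Nat.sub_le Nn 1) t)) x|) ^ 2) ≤ ε ^ 2 ∧
        ε < ∑ x : Fin 2, |P μ s a (e (Fin.castLE (Nat.sub_le Nn 1) i)) x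
              - P μ' s a (e (Fin.castLE (Nat.sub_le Nn 1) i)) x|) ∧
    -- consequently: an ε-independent sequence of length `C(ζ+d−1,d−1) − 1` exists
    (∃ seq : Fin ((ζ + d - 1).choose (d - 1) - 1) → S × A × (S → ℝ),
      (∀ i, (seq i).2.2 ∈ stdSimplex ℝ S) ∧
      ∀ i, ∃ μ ∈ 𝓝, ∃ μ' ∈ 𝓝,
        (∑ t ∈ Finset.Iio i,
            (∑ x : Fin 2, |P μ (seq t).1 (seq t).2.1 (seq t).2.2 x
              - P μ' (seq t).1 (seq t).2.1 (seq t).2.2 x|) ^ 2) ≤ ε ^ 2 ∧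
        ε < ∑ x : Fin 2, |P μ (seq i).1 (seq i).2.1 (seq i).2.2 x
              - P μ' (seq i).1 (seq i).2.1 (seq i).2.2 x|) := by
  classical
  have hε5 : (0:ℝ) < 5 * ε := by positivity
  have hζ1 : 1 ≤ ζ := by
    rw [hζ]
    exact Nat.le_floor (by rw [Nat.cast_one, le_div_iff₀ hε5]; linarith)
  have hζR : (0:ℝ) < (ζ:ℝ) := by exact_mod_cast hζ1
  have hζle : (ζ:ℝ) ≤ L_T / (5 * ε) := by
    rw [hζ]; exact Nat.floor_le (by positivity)
  have hζ5 : (ζ:ℝ) * (5 * ε) ≤ L_T := (le_div_iff₀ hε5).mp hζle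
  -- ========== part (ii) ==========
  have key2 : ∀ μ ∈ 𝓝, ∀ μ' ∈ 𝓝, μ ≠ μ' → 2 / (ζ : ℝ) ≤ ∑ s, |μ s - μ' s| := by
    intro μ hμ μ' hμ' hne
    rw [h𝓝] at hμ hμ'
    obtain ⟨hμs, hμk⟩ := hμ
    obtain ⟨hμ's, hμ'k⟩ := hμ'
    obtain ⟨s₀, hs₀⟩ : ∃ s₀, μ s₀ ≠ μ' s₀ := by
      by_contra h; push_neg at h; exact hne (funext h)
    have hstep : (1:ℝ) / ζ ≤ |μ s₀ - μ' s₀| := by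
      obtain ⟨k, hk⟩ := hμk s₀
      obtain ⟨k', hk'⟩ := hμ'k s₀
      have hkk : (k:ℤ) ≠ (k':ℤ) := by
        intro h
        apply hs₀
        have hkr : (k:ℝ) = (k':ℝ) := by exact_mod_cast h
        exact mul_left_cancel₀ (ne_of_gt hζR) (hk.trans (hkr.trans hk'.symm))
      have h2 : (1:ℤ) ≤ |(k:ℤ) - (k':ℤ)| := Int.one_le_abs (sub_ne_zero.mpr hkk)
      have h2r : (1:ℝ) ≤ |(k:ℝ) - (k':ℝ)| := by exact_mod_cast h2
      have hdiff : (ζ:ℝ) * (μ s₀ - μ' s₀) = (k:ℝ) - (k':ℝ) := by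
        rw [mul_sub, hk, hk']
      rw [div_le_iff₀ hζR]
      calc (1:ℝ) ≤ |(k:ℝ) - (k':ℝ)| := h2r
        _ = |(ζ:ℝ) * (μ s₀ - μ' s₀)| := by rw [hdiff]
        _ = |μ s₀ - μ' s₀| * (ζ:ℝ) := by
            rw [abs_mul, abs_of_pos hζR, mul_comm]
    have hsum0 : ∑ s, (μ s - μ' s) = 0 := by
      rw [Finset.sum_sub_distrib, hμs.2, hμ's.2, sub_self]
    have herase : ∑ s ∈ Finset.univ.erase s₀, (μ s - μ' s) = -(μ s₀ - μ' s₀) := by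
      rw [Finset.sum_erase_eq_sub (Finset.mem_univ s₀), hsum0]
      ring
    have habs : |μ s₀ - μ' s₀| ≤ ∑ s ∈ Finset.univ.erase s₀, |μ s - μ' s| := by
      calc |μ s₀ - μ' s₀| = |∑ s ∈ Finset.univ.erase s₀, (μ s - μ' s)| := by
            rw [herase, abs_neg]
        _ ≤ ∑ s ∈ Finset.univ.erase s₀, |μ s - μ' s| :=
            Finset.abs_sum_le_sum_abs _ _
    calc 2 / (ζ:ℝ) = 1/ζ + 1/ζ := by ring
      _ ≤ |μ s₀ - μ' s₀| + ∑ s ∈ Finset.univ.erase s₀, |μ s - μ' s| := by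
          apply add_le_add hstep (hstep.trans habs)
      _ = ∑ s, |μ s - μ' s| :=
          Finset.add_sum_erase Finset.univ (fun s => |μ s - μ' s|) (Finset.mem_univ s₀)
  -- ========== part (i) ==========
  haveI hTfin : Finite {f : S → ℕ // ∑ s, f s = ζ} :=
    Finite.of_equiv _ (Sym.equivNatSumOfFintype S ζ)
  have hTcard : Nat.card {f : S → ℕ // ∑ s, f s = ζ} = (ζ + d - 1).choose (d - 1) := by
    rw [Nat.card_congr (Sym.equivNatSumOfFintype S ζ).symm, Nat.card_eq_fintype_card,
      Sym.card_sym_eq_choose, hcard]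
    have h1 : ζ ≤ ζ + d - 1 := by omega
    have h2 : ζ + d - 1 - ζ = d - 1 := by omega
    rw [add_comm d ζ, ← h2, Nat.choose_symm h1]
  set Φ : {f : S → ℕ // ∑ s, f s = ζ} → (S → ℝ) := fun f s => (f.1 s : ℝ) / ζ with hΦ
  have hΦinj : Function.Injective Φ := by
    intro f g h
    apply Subtype.ext; funext s
    have h1 : (f.1 s : ℝ) / ζ = (g.1 s : ℝ) / ζ := congrFun h s
    field_simp at h1
    exact_mod_cast h1
  have hΦrange : Set.range Φ = 𝓝 := by
    ext μ
    constructor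
    · rintro ⟨f, rfl⟩
      rw [h𝓝]
      refine ⟨⟨fun s => by positivity, ?_⟩, fun s => ⟨f.1 s, ?_⟩⟩
      · have : ∑ s, ((f.1 s : ℝ) / ζ) = ((∑ s, f.1 s : ℕ) : ℝ) / ζ := by
          rw [← Finset.sum_div]; push_cast; ring
        rw [this, f.2, div_self (ne_of_gt hζR)]
      · show (ζ:ℝ) * ((f.1 s : ℝ) / ζ) = f.1 s
        field_simp
    · intro hμ
      rw [h𝓝] at hμ
      obtain ⟨⟨hpos, hsum⟩, hk⟩ := hμ
      choose k hkk using hk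
      have hμeq : ∀ s, μ s = (k s : ℝ) / ζ := by
        intro s
        rw [← hkk s]; field_simp
      refine ⟨⟨k, ?_⟩, ?_⟩
      · have : ((∑ s, k s : ℕ) : ℝ) = (ζ:ℝ) := by
          push_cast
          calc ∑ s, (k s : ℝ) = ∑ s, (ζ:ℝ) * μ s := by
                exact Finset.sum_congr rfl fun s _ => (hkk s).symm
            _ = (ζ:ℝ) * ∑ s, μ s := by rw [Finset.mul_sum]
            _ = (ζ:ℝ) := by rw [hsum, mul_one]
        exact_mod_cast this
      · funext s
        exact (hμeq s).symm
  have part1 : 𝓝.ncard = (ζ + d - 1).choose (d - 1) := by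
    rw [← hΦrange, ← Nat.card_coe_set_eq, Nat.card_range_of_injective hΦinj, hTcard]
  clear hTcard
  -- ========== distance computation helpers ==========
  have hD : ∀ (μ μ' : S → ℝ) (s : S) (a : A) (ν : S → ℝ),
      ∑ x : Fin 2, |P μ s a ν x - P μ' s a ν x|
      = 4 * ε * |max (1 - L_T / (4 * ε) * ∑ x, |ν x - μ x|) 0
                - max (1 - L_T / (4 * ε) * ∑ x, |ν x - μ' x|) 0| := by
    intro μ μ' s a ν
    set B := max (1 - L_T / (4 * ε) * ∑ x, |ν x - μ x|) 0 with hB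
    set B' := max (1 - L_T / (4 * ε) * ∑ x, |ν x - μ' x|) 0 with hB'
    have h0 : P μ s a ν 0 - P μ' s a ν 0 = 2 * ε * (B - B') := by
      rw [hP0, hP0]; ring
    have h1 : P μ s a ν 1 - P μ' s a ν 1 = -(2 * ε * (B - B')) := by
      rw [hP1, hP1]; linarith [h0]
    rw [Fin.sum_univ_two, h0, h1, abs_neg]
    rw [abs_mul, abs_of_pos (by positivity : (0:ℝ) < 2 * ε)]
    ring
  have hBself : ∀ (ν : S → ℝ), max (1 - L_T / (4 * ε) * ∑ x, |ν x - ν x|) 0 = 1 := by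
    intro ν; simp
  have hBfar : ∀ (μ ν : S → ℝ), μ ∈ 𝓝 → ν ∈ 𝓝 → ν ≠ μ →
      max (1 - L_T / (4 * ε) * ∑ x, |ν x - μ x|) 0 = 0 := by
    intro μ ν hμ hν hne
    have h2 := key2 ν hν μ hμ hne
    have hcpos : (0:ℝ) < L_T / (4 * ε) := by positivity
    have hc1 : (1:ℝ) ≤ L_T / (4 * ε) * (2 / ζ) := by
      rw [div_mul_div_comm, le_div_iff₀ (by positivity)]
      nlinarith
    have hc : 1 ≤ L_T / (4 * ε) * ∑ x, |ν x - μ x| :=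
      hc1.trans (mul_le_mul_of_nonneg_left h2 (le_of_lt hcpos))
    exact max_eq_right (by linarith)
  -- ========== part (iii) ==========
  have key3 : ∀ (s : S) (a : A) (Nn : ℕ) (e : Fin Nn → (S → ℝ)),
      Function.Injective e → Set.range e = 𝓝 →
      ∀ i : Fin (Nn - 1), ∃ μ ∈ 𝓝, ∃ μ' ∈ 𝓝,
        (∑ t ∈ Finset.Iio i,
            (∑ x : Fin 2, |P μ s a (e (Fin.castLE (Nat.sub_le Nn 1) t)) x
              - P μ' s a (e (Fin.castLE (Nat.sub_le Nn 1) t)) x|) ^ 2) ≤ ε ^ 2 ∧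
        ε < ∑ x : Fin 2, |P μ s a (e (Fin.castLE (Nat.sub_le Nn 1) i)) x
              - P μ' s a (e (Fin.castLE (Nat.sub_le Nn 1) i)) x| := by
    intro s a Nn e he hrange i
    have hilt : (i : ℕ) < Nn - 1 := i.isLt
    have hNn2 : 2 ≤ Nn := by omega
    have hlast : Nn - 1 < Nn := by omega
    set jlast : Fin Nn := ⟨Nn - 1, hlast⟩ with hjlast
    set ii : Fin Nn := Fin.castLE (Nat.sub_le Nn 1) i with hii
    have hmem : ∀ j : Fin Nn, e j ∈ 𝓝 := by
      intro j; rw [← hrange]; exact ⟨j, rfl⟩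
    have hne_ij : e ii ≠ e jlast := by
      intro h
      have := he h
      apply absurd (congrArg Fin.val this)
      simp only [hii, hjlast, Fin.coe_castLE]
      omega
    refine ⟨e ii, hmem ii, e jlast, hmem jlast, ?_, ?_⟩
    · -- sum over earlier points is zero
      have hzero : ∀ t ∈ Finset.Iio i,
          (∑ x : Fin 2, |P (e ii) s a (e (Fin.castLE (Nat.sub_le Nn 1) t)) x
            - P (e jlast) s a (e (Fin.castLE (Nat.sub_le Nn 1) t)) x|) ^ 2 = 0 := by
        intro t ht
        rw [Finset.mem_Iio] at ht
        set νt : S → ℝ := e (Fin.castLE (Nat.sub_le Nn 1) t) with hνt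
        have hne1 : νt ≠ e ii := by
          intro h
          have := he h
          apply absurd (congrArg Fin.val this)
          simp only [Fin.coe_castLE, hii]
          have : (t:ℕ) < (i:ℕ) := ht
          omega
        have hne2 : νt ≠ e jlast := by
          intro h
          have := he h
          apply absurd (congrArg Fin.val this)
          simp only [Fin.coe_castLE, hjlast]
          have := t.isLt
          omega
        rw [hD, hBfar (e ii) νt (hmem ii) (hmem _) hne1,
          hBfar (e jlast) νt (hmem jlast) (hmem _) hne2]
        simp
      rw [Finset.sum_eq_zero hzero]
      positivity
    · -- at point i the distance is 4ε > ε
      rw [hD, hBself, hBfar (e jlast) (e ii) (hmem jlast) (hmem ii) hne_ij]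
      rw [sub_zero, abs_one, mul_one]
      linarith
  refine ⟨part1, key2, key3, ?_⟩
  -- ========== part (iv) ==========
  have hfin : 𝓝.Finite := by rw [← hΦrange]; exact Set.finite_range Φ
  have hSne : Nonempty S := by
    rw [← Fintype.card_pos_iff, hcard]; omega
  obtain ⟨s₀⟩ := hSne
  have a₀ : A := Classical.arbitrary A
  set Nn := hfin.toFinset.card with hNn
  have hNeq : (ζ + d - 1).choose (d - 1) = Nn := by
    rw [← part1, Set.ncard_eq_toFinset_card 𝓝 hfin]
  set e : Fin Nn → (S → ℝ) := fun i => (hfin.toFinset.equivFin.symm i : S → ℝ) with he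
  have he_inj : Function.Injective e := fun i j h =>
    hfin.toFinset.equivFin.symm.injective (Subtype.ext h)
  have he_range : Set.range e = 𝓝 := by
    ext μ
    simp only [Set.mem_range]
    constructor
    · rintro ⟨i, rfl⟩
      exact hfin.mem_toFinset.mp (hfin.toFinset.equivFin.symm i).2
    · intro hμ
      refine ⟨hfin.toFinset.equivFin ⟨μ, hfin.mem_toFinset.mpr hμ⟩, ?_⟩
      simp [he]
  rw [hNeq]
  refine ⟨fun i => (s₀, a₀, e (Fin.castLE (Nat.sub_le Nn 1) i)), ?_, ?_⟩
  · intro i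
    have h : e (Fin.castLE (Nat.sub_le Nn 1) i) ∈ 𝓝 := by
      rw [← he_range]; exact ⟨_, rfl⟩
    rw [h𝓝] at h
    exact h.1
  · intro i
    exact key3 s₀ a₀ Nn e he_inj he_range i
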